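/- Let w ∈ ℝ^d be nonzero with Euclidean norm ‖w‖ and β > 0. Then for every x ∈ ℝ^d, ∫_ℝ p_β(ε) · relu(⟨w, x⟩ − ‖w‖·ε) dε = softplus_{β/‖w‖}(⟨w, x⟩). -/

import Mathlib

open MeasureTheory
open scoped RealInnerProductSpace

noncomputable def softplus (β t : ℝ) : ℝ := (1 / β) * Real.log (1 + Real.exp (β * t))

noncomputable def pdens (β ε : ℝ) : ℝ :=
  β / (Real.exp (β * ε / 2) + Real.exp (-(β * ε / 2))) ^ 2

noncomputable def relu (t : ℝ) : ℝ := max t 0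

open Real Filter Set

lemma pdens_eq (β ε : ℝ) :
    pdens β ε = β * Real.exp (-(β * ε)) / (1 + Real.exp (-(β * ε))) ^ 2 := by
  unfold pdens
  set u := β * ε / 2 with hu
  have h1 : Real.exp u * Real.exp (-u) = 1 := by rw [← Real.exp_add]; simp
  have key : (Real.exp u + Real.exp (-u)) ^ 2 * Real.exp (-(β * ε))
      = (1 + Real.exp (-(β * ε))) ^ 2 := by
    have h2 : -(β * ε) = -u + -u := by rw [hu]; ring
    rw [h2, Real.exp_add]
    have expand : (Real.exp u + Real.exp (-u)) ^ 2 * (Real.exp (-u) * Real.exp (-u))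
        = ((Real.exp u + Real.exp (-u)) * Real.exp (-u)) ^ 2 := by ring
    rw [expand, add_mul, h1]
  have hd : (Real.exp u + Real.exp (-u)) ^ 2 ≠ 0 :=
    ne_of_gt (pow_pos (add_pos (Real.exp_pos _) (Real.exp_pos _)) 2)
  have hd2 : (1 + Real.exp (-(β * ε))) ^ 2 ≠ 0 :=
    ne_of_gt (pow_pos (by positivity) 2)
  rw [div_eq_div_iff hd hd2]
  linear_combination (-β) * key

/-- Let `w ∈ ℝ^d` be nonzero with Euclidean norm `‖w‖` and `β > 0`. Then for every `x ∈ ℝ^d`,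
`∫_ℝ p_β(ε) · relu(⟨w, x⟩ − ‖w‖·ε) dε = softplus_{β/‖w‖}(⟨w, x⟩)`. -/
theorem integral_pdens_relu_inner (d : ℕ) (w : EuclideanSpace ℝ (Fin d)) (hw : w ≠ 0)
    (β : ℝ) (hβ : 0 < β) (x : EuclideanSpace ℝ (Fin d)) :
    ∫ ε : ℝ, pdens β ε * relu (⟪w, x⟫ - ‖w‖ * ε) = softplus (β / ‖w‖) ⟪w, x⟫ := by
  set c : ℝ := ‖w‖ with hc
  have hc0 : 0 < c := by simpa [hc] using norm_pos_iff.mpr hw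
  set a : ℝ := ⟪w, x⟫ with ha
  set t : ℝ := a / c with ht
  -- the CDF
  set S : ℝ → ℝ := fun ε => (1 + Real.exp (-(β * ε)))⁻¹ with hSdef
  have hSpos : ∀ ε : ℝ, (0:ℝ) < 1 + Real.exp (-(β * ε)) := fun ε => by positivity
  have hSalt : ∀ ε : ℝ, S ε = Real.exp (β * ε) / (1 + Real.exp (β * ε)) := by
    intro ε
    have h1 : (0:ℝ) < 1 + Real.exp (β * ε) := by positivity
    rw [hSdef]
    rw [eq_div_iff (ne_of_gt h1), inv_mul_eq_div, div_eq_iff (ne_of_gt (hSpos ε))]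
    rw [mul_add, mul_one, ← Real.exp_add]
    simp [add_comm]
  -- the antiderivative
  set H : ℝ → ℝ := fun ε => S ε * (a - c * ε) + (c / β) * Real.log (1 + Real.exp (β * ε))
    with hHdef
  set f' : ℝ → ℝ := fun ε => pdens β ε * (a - c * ε) with hf'def
  have hS : ∀ ε : ℝ, HasDerivAt S (pdens β ε) ε := by
    intro ε
    have h1 : HasDerivAt (fun ε : ℝ => -(β * ε)) (-β) ε := by
      have h := ((hasDerivAt_id ε).const_mul β).neg
      rw [mul_one] at h
      exact h
    have h2 : HasDerivAt (fun ε : ℝ => 1 + Real.exp (-(β * ε)))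
        (Real.exp (-(β * ε)) * -β) ε := (h1.exp).const_add 1
    have h3 := h2.inv (ne_of_gt (hSpos ε))
    convert h3 using 1
    · rfl
    · rfl
    · rfl
    rw [pdens_eq]
    field_simp
  have hH : ∀ ε : ℝ, HasDerivAt H (f' ε) ε := by
    intro ε
    have hlin : HasDerivAt (fun ε : ℝ => a - c * ε) (-c) ε := by
      simpa using ((hasDerivAt_id ε).const_mul c).const_sub a
    have h1 := (hS ε).mul hlin
    have h2 : HasDerivAt (fun ε : ℝ => 1 + Real.exp (β * ε)) (β * Real.exp (β * ε)) ε := by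
      have := ((hasDerivAt_id ε).const_mul β).exp.const_add 1
      simpa [mul_comm] using this
    have h3 := (h2.log (ne_of_gt (by positivity))).const_mul (c / β)
    have h4 := h1.add h3
    convert h4 using 1
    · rfl
    · rfl
    · rfl
    have : S ε * -c + c / β * (β * Real.exp (β * ε) / (1 + Real.exp (β * ε))) = 0 := by
      rw [hSalt]
      field_simp
      ring
    rw [hf'def]
    simp only []
    linarith [this]
  -- limit of H at -∞
  have hβε : Tendsto (fun ε : ℝ => β * ε) atBot atBot := by
    exact Tendsto.const_mul_atBot hβ tendsto_id
  have hexp : Tendsto (fun ε : ℝ => Real.exp (β * ε)) atBot (nhds 0) :=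
    Real.tendsto_exp_atBot.comp hβε
  have hmulexp : Tendsto (fun ε : ℝ => ε * Real.exp (β * ε)) atBot (nhds 0) := by
    have htop : Tendsto (fun ε : ℝ => -(β * ε)) atBot atTop := tendsto_neg_atBot_atTop.comp hβε
    have h0 := (Real.tendsto_pow_mul_exp_neg_atTop_nhds_zero 1).comp htop
    have h1 : Tendsto (fun ε : ℝ => (-(β * ε)) ^ 1 * Real.exp (-(-(β * ε)))) atBot (nhds 0) := h0
    have h2 := h1.const_mul (-(1 / β))
    rw [mul_zero] at h2
    refine h2.congr (fun ε => ?_)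
    rw [neg_neg]
    field_simp
  have hHlim : Tendsto H atBot (nhds 0) := by
    have hterm1 : Tendsto (fun ε => S ε * (a - c * ε)) atBot (nhds 0) := by
      have hnum : Tendsto (fun ε : ℝ => Real.exp (β * ε) * (a - c * ε)) atBot (nhds 0) := by
        have h1 := (hexp.const_mul a).sub (hmulexp.const_mul c)
        rw [mul_zero, mul_zero, sub_zero] at h1
        refine h1.congr (fun ε => ?_)
        ring
      have hden : Tendsto (fun ε : ℝ => (1 + Real.exp (β * ε))⁻¹) atBot (nhds 1) := by
        have := (tendsto_const_nhds.add hexp).inv₀ (by norm_num : (1:ℝ) + 0 ≠ 0)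
        simpa using this
      have := hnum.mul hden
      rw [zero_mul] at this
      refine this.congr (fun ε => ?_)
      rw [hSalt]
      ring
    have hterm2 : Tendsto (fun ε => (c / β) * Real.log (1 + Real.exp (β * ε))) atBot (nhds 0) := by
      have hlog : Tendsto (fun ε : ℝ => Real.log (1 + Real.exp (β * ε))) atBot (nhds 0) := by
        have h1 : Tendsto (fun ε : ℝ => 1 + Real.exp (β * ε)) atBot (nhds 1) := by
          simpa using tendsto_const_nhds.add hexp
        have := (Real.continuousAt_log (by norm_num : (1:ℝ) ≠ 0)).tendsto.comp h1
        rw [Real.log_one] at this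
        exact this
      simpa using hlog.const_mul (c / β)
    have := hterm1.add hterm2
    rw [add_zero] at this
    exact this
  -- continuity / nonnegativity of f'
  have hpdens_pos : ∀ ε : ℝ, 0 < pdens β ε := by
    intro ε; unfold pdens; positivity
  have hf'cont : Continuous f' := by
    have h1 : Continuous (fun ε : ℝ => pdens β ε) := by
      unfold pdens
      apply Continuous.div continuous_const
      · fun_prop
      · intro ε; positivity
    fun_prop
  have hf'nonneg : ∀ ε ∈ Iic t, 0 ≤ f' ε := by
    intro ε hε
    have : c * ε ≤ a := by
      rw [ht] at hε
      calc c * ε ≤ c * (a / c) := by nlinarith [hε.out]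
        _ = a := by field_simp
    exact mul_nonneg (le_of_lt (hpdens_pos ε)) (by linarith)
  have hHnonneg : ∀ ε ∈ Iic t, 0 ≤ H ε := by
    intro ε hε
    have h1 : c * ε ≤ a := by
      calc c * ε ≤ c * (a / c) := by nlinarith [hε.out]
        _ = a := by field_simp
    have h2 : 0 ≤ S ε := le_of_lt (inv_pos.mpr (hSpos ε))
    have h3 : 0 ≤ Real.log (1 + Real.exp (β * ε)) :=
      Real.log_nonneg (by nlinarith [Real.exp_pos (β * ε)])
    have h4 : 0 ≤ c / β := le_of_lt (div_pos hc0 hβ)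
    rw [hHdef]
    have := mul_nonneg h2 (by linarith : (0:ℝ) ≤ a - c * ε)
    positivity
  -- integrability of f' on Iic t
  have hint : IntegrableOn f' (Iic t) := by
    apply integrableOn_Iic_of_intervalIntegral_norm_bounded (H t) t
      (fun i : ℝ => (hf'cont.integrableOn_Ioc (a := i) (b := t))) (tendsto_id (α := ℝ))
    filter_upwards [Iic_mem_atBot t] with i (hi : i ≤ t)
    have heq : (∫ x in i..t, ‖f' x‖) = ∫ x in i..t, f' x := by
      apply intervalIntegral.integral_congr
      intro y hy
      rw [uIcc_of_le hi] at hy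
      exact Real.norm_of_nonneg (hf'nonneg y (le_trans hy.2 le_rfl))
    rw [heq, intervalIntegral.integral_eq_sub_of_hasDerivAt (fun y _ => hH y)
      (hf'cont.intervalIntegrable i t)]
    linarith [hHnonneg i hi]
  -- FTC on Iic t
  have hFTC : ∫ ε in Iic t, f' ε = H t := by
    rw [integral_Iic_of_hasDerivAt_of_tendsto' (fun ε _ => hH ε) hint hHlim, sub_zero]
  -- reduce the full integral to Iic t
  have hred : ∫ ε : ℝ, pdens β ε * relu (a - c * ε) = ∫ ε in Iic t, f' ε := by
    rw [← setIntegral_eq_integral_of_forall_compl_eq_zero (s := Iic t)]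
    · apply setIntegral_congr_fun measurableSet_Iic
      intro ε hε
      have h1 : c * ε ≤ a := by
        calc c * ε ≤ c * (a / c) := by nlinarith [hε.out]
          _ = a := by field_simp
      rw [hf'def]
      simp only []
      unfold relu
      rw [max_eq_left (by linarith)]
    · intro ε hε
      have h1 : t < ε := by simpa using hε
      have h2 : a < c * ε := by
        calc a = c * (a / c) := by field_simp
          _ < c * ε := by nlinarith
      unfold relu
      rw [max_eq_right (by linarith), mul_zero]
  rw [hred, hFTC]
  -- compute H t
  have hat : a - c * t = 0 := by rw [ht]; field_simp; ring
  rw [hHdef]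
  simp only [hat, mul_zero, zero_add]
  unfold softplus
  have h1 : β * t = β / c * a := by rw [ht]; field_simp
  rw [h1]
  have h2 : c / β = 1 / (β / c) := by field_simp
  rw [h2]
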